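/- Let (v_k)_{k≥0} be a sequence of nonnegative integrable random variables adapted to a filtration (𝓕_k) with E[v_0] < ∞, and let (χ_k) and (β_k) be deterministic scalar sequences such that 0 ≤ χ_k ≤ 1 and β_k ≥ 0 for all k ≥ 0, Σ_{k=0}^∞ χ_k = ∞, Σ_{k=0}^∞ β_k < ∞, lim_{k→∞} β_k/χ_k = 0, and E[v_{k+1} | 𝓕_k] ≤ (1 − χ_k) v_k + β_k almost surely for all k ≥ 0. Then v_k → 0 almost surely as k → ∞. -/

import Mathlib

open MeasureTheory Filter Finset
open scoped Topology

theorem det_tendsto_zero (a χ β : ℕ → ℝ)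
    (ha : ∀ k, 0 ≤ a k)
    (hχ : ∀ k, 0 ≤ χ k ∧ χ k ≤ 1) (hβ : ∀ k, 0 ≤ β k)
    (hχ_div : ¬ Summable χ) (hβ_sum : Summable β)
    (hratio : Tendsto (fun k => β k / χ k) atTop (𝓝 0))
    (hrec : ∀ k, a (k + 1) ≤ (1 - χ k) * a k + β k) :
    Tendsto a atTop (𝓝 0) := by
  rw [Metric.tendsto_atTop]
  intro ε hε
  set ε' := ε / 3 with hε'def
  have hε' : 0 < ε' := by positivity
  -- N1 : ratio small
  obtain ⟨N1, hN1⟩ := (Metric.tendsto_atTop.1 hratio) ε' hε'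
  -- N2 : tail sums small
  obtain ⟨N2, hN2⟩ := (Metric.tendsto_atTop.1 (tendsto_sum_nat_add β)) ε' hε'
  set N := max N1 N2 with hNdef
  -- tail sum bound
  have htail : ∀ n, ∑ j ∈ Ico N n, β j ≤ ε' := by
    intro n
    have h1 : ∑ j ∈ Ico N n, β j = ∑ i ∈ range (n - N), β (i + N) := by
      rw [Finset.sum_Ico_eq_sum_range]
      exact Finset.sum_congr rfl fun i _ => by ring_nf
    rw [h1]
    have hsumm : Summable fun i => β (i + N) := (summable_nat_add_iff N).2 hβ_sum
    have h2 : ∑ i ∈ range (n - N), β (i + N) ≤ ∑' i, β (i + N) :=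
      Summable.sum_le_tsum _ (fun i _ => hβ _) hsumm
    have h3 : ∑' i, β (i + N) ≤ ε' := by
      have := hN2 N (le_max_right _ _)
      rw [Real.dist_eq, sub_zero, abs_of_nonneg (tsum_nonneg fun i => hβ _)] at this
      linarith
    linarith
  -- gamma
  set γ : ℕ → ℝ := fun k => max (β k - ε' * χ k) 0 with hγdef
  have hγβ : ∀ k, γ k ≤ β k := by
    intro k
    simp only [hγdef, max_le_iff]
    constructor
    · nlinarith [(hχ k).1, hε'.le]
    · exact hβ k
  have hγ0 : ∀ k ≥ N, γ k ≤ β k := fun k _ => hγβ k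
  -- key induction
  set M := max (a N - ε') 0 with hMdef
  have key : ∀ n, N ≤ n →
      max (a n - ε') 0 ≤ (∏ j ∈ Ico N n, (1 - χ j)) * M + ∑ j ∈ Ico N n, γ j := by
    intro n hn
    induction n with
    | zero =>
      have h0 : N = 0 := Nat.le_zero.mp hn
      simp [Finset.Ico_self, hMdef, h0]
    | succ n ih =>
      rcases Nat.lt_or_ge N (n+1) with h | h
      · have hn' : N ≤ n := by omega
        have ihn := ih hn'
        have hprod_nonneg : 0 ≤ ∏ j ∈ Ico N n, (1 - χ j) :=
          Finset.prod_nonneg fun j _ => by linarith [(hχ j).2]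
        have hγsum_nonneg : 0 ≤ ∑ j ∈ Ico N n, γ j :=
          Finset.sum_nonneg fun j _ => le_max_right _ _
        have h1n : 0 ≤ 1 - χ n := by linarith [(hχ n).2]
        have h1n' : 1 - χ n ≤ 1 := by linarith [(hχ n).1]
        have step : max (a (n+1) - ε') 0 ≤ (1 - χ n) * max (a n - ε') 0 + γ n := by
          have h2 : a (n+1) - ε' ≤ (1 - χ n) * (a n - ε') + (β n - ε' * χ n) := by
            have := hrec n; nlinarith
          have h3 : (1 - χ n) * (a n - ε') ≤ (1 - χ n) * max (a n - ε') 0 :=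
            mul_le_mul_of_nonneg_left (le_max_left _ _) h1n
          have h4 : β n - ε' * χ n ≤ γ n := le_max_left _ _
          have h5 : 0 ≤ (1 - χ n) * max (a n - ε') 0 + γ n := by
            have := le_max_right (β n - ε' * χ n) (0:ℝ)
            positivity
          exact max_le (by linarith) h5
        have hprodsucc : ∏ j ∈ Ico N (n+1), (1 - χ j) = (∏ j ∈ Ico N n, (1 - χ j)) * (1 - χ n) :=
          Finset.prod_Ico_succ_top hn' _
        have hsumsucc : ∑ j ∈ Ico N (n+1), γ j = (∑ j ∈ Ico N n, γ j) + γ n :=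
          Finset.sum_Ico_succ_top hn' _
        have hM0 : 0 ≤ M := le_max_right _ _
        calc max (a (n+1) - ε') 0 ≤ (1 - χ n) * max (a n - ε') 0 + γ n := step
          _ ≤ (1 - χ n) * ((∏ j ∈ Ico N n, (1 - χ j)) * M + ∑ j ∈ Ico N n, γ j) + γ n :=
              by nlinarith [mul_le_mul_of_nonneg_left ihn h1n]
          _ ≤ (∏ j ∈ Ico N (n+1), (1 - χ j)) * M + ∑ j ∈ Ico N (n+1), γ j := by
              rw [hprodsucc, hsumsucc]
              nlinarith [mul_nonneg hprod_nonneg hM0]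
      · have h0 : N = n + 1 := by omega
        simp [h0, Finset.Ico_self, hMdef]
  -- product tends to 0
  have hsum_tendsto : Tendsto (fun n => ∑ j ∈ range n, χ j) atTop atTop :=
    (not_summable_iff_tendsto_nat_atTop_of_nonneg fun k => (hχ k).1).1 hχ_div
  have hprod_tendsto : Tendsto (fun n => (∏ j ∈ Ico N n, (1 - χ j)) * M) atTop (𝓝 0) := by
    have hM0 : 0 ≤ M := le_max_right _ _
    have hb : ∀ n, (∏ j ∈ Ico N n, (1 - χ j)) * M ≤ Real.exp (-(∑ j ∈ Ico N n, χ j)) * M := by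
      intro n
      apply mul_le_mul_of_nonneg_right _ hM0
      calc ∏ j ∈ Ico N n, (1 - χ j) ≤ ∏ j ∈ Ico N n, Real.exp (-(χ j)) :=
            Finset.prod_le_prod (fun j _ => by linarith [(hχ j).2])
              (fun j _ => by linarith [Real.add_one_le_exp (-(χ j))])
        _ = Real.exp (-(∑ j ∈ Ico N n, χ j)) := by
            rw [← Real.exp_sum, Finset.sum_neg_distrib]
    have hlow : ∀ n, 0 ≤ (∏ j ∈ Ico N n, (1 - χ j)) * M := fun n =>
      mul_nonneg (Finset.prod_nonneg fun j _ => by linarith [(hχ j).2]) hM0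
    have hsumIco : Tendsto (fun n => ∑ j ∈ Ico N n, χ j) atTop atTop := by
      have heq : ∀ n, N ≤ n → ∑ j ∈ Ico N n, χ j = ∑ j ∈ range n, χ j - ∑ j ∈ range N, χ j := by
        intro n hn
        rw [Finset.sum_Ico_eq_sub _ hn]
      have h2 : Tendsto (fun n => ∑ j ∈ range n, χ j - ∑ j ∈ range N, χ j) atTop atTop := by
        simpa [sub_eq_add_neg] using
          hsum_tendsto.atTop_add (tendsto_const_nhds (x := -(∑ j ∈ range N, χ j)))
      exact tendsto_atTop_mono' atTop (eventually_atTop.2 ⟨N, fun n hn => (heq n hn).ge⟩) h2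
    have hexp : Tendsto (fun n => Real.exp (-(∑ j ∈ Ico N n, χ j)) * M) atTop (𝓝 0) := by
      have h1 : Tendsto (fun n => Real.exp (-(∑ j ∈ Ico N n, χ j))) atTop (𝓝 0) :=
        Real.tendsto_exp_atBot.comp (tendsto_neg_atTop_atBot.comp hsumIco)
      simpa using h1.mul_const M
    exact squeeze_zero hlow hb hexp
  -- conclude
  have hev := (Metric.tendsto_atTop.1 hprod_tendsto) ε' hε'
  obtain ⟨N3, hN3⟩ := hev
  refine ⟨max N N3, fun n hn => ?_⟩
  have hnN : N ≤ n := le_trans (le_max_left _ _) hn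
  have hkey := key n hnN
  have hγsum : ∑ j ∈ Ico N n, γ j ≤ ε' :=
    le_trans (Finset.sum_le_sum fun j _ => hγβ j) (htail n)
  have hp := hN3 n (le_trans (le_max_right _ _) hn)
  rw [Real.dist_eq, sub_zero] at hp
  have hp' : (∏ j ∈ Ico N n, (1 - χ j)) * M < ε' := lt_of_abs_lt hp
  have : a n - ε' ≤ max (a n - ε') 0 := le_max_left _ _
  rw [Real.dist_eq, sub_zero, abs_of_nonneg (ha n)]
  linarith

noncomputable section

/-- Robbins–Siegmund type super-martingale convergence lemma. -/
theorem supermartingale_convergence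
    {Ω : Type*} {m0 : MeasurableSpace Ω} (P : Measure Ω) [IsProbabilityMeasure P]
    (ℱ : Filtration ℕ m0)
    (v : ℕ → Ω → ℝ) (χ β : ℕ → ℝ)
    (hv_nonneg : ∀ k ω, 0 ≤ v k ω)
    (hv_int : ∀ k, Integrable (v k) P)
    (hv_adapted : Adapted ℱ v)
    (hχ : ∀ k, 0 ≤ χ k ∧ χ k ≤ 1) (hβ : ∀ k, 0 ≤ β k)
    (hχ_div : ¬ Summable χ)
    (hβ_sum : Summable β)
    (hratio : Tendsto (fun k => β k / χ k) atTop (𝓝 0))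
    (hrec : ∀ k, P[v (k + 1) | ℱ k] ≤ᵐ[P] fun ω => (1 - χ k) * v k ω + β k) :
    ∀ᵐ ω ∂P, Tendsto (fun k => v k ω) atTop (𝓝 0) := by
  -- tail sums of β
  set t : ℕ → ℝ := fun n => ∑' j, β (j + n) with htdef
  have hts : ∀ n, Summable fun j => β (j + n) := fun n => (summable_nat_add_iff n).2 hβ_sum
  have ht_nonneg : ∀ n, 0 ≤ t n := fun n => tsum_nonneg fun j => hβ _
  have ht_rec : ∀ n, t n = β n + t (n + 1) := by
    intro n
    have h0 := Summable.tsum_eq_zero_add (hts n)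
    rw [htdef]
    simp only []
    rw [h0, Nat.zero_add]
    congr 1
    exact tsum_congr fun j => by congr 1; omega
  have ht0 : Tendsto t atTop (𝓝 0) := tendsto_sum_nat_add β
  -- the auxiliary supermartingale
  set w : ℕ → Ω → ℝ := fun n ω => v n ω + t n with hwdef
  have hwint : ∀ n, Integrable (w n) P := fun n => (hv_int n).add (integrable_const _)
  have hwadp : Adapted ℱ w := fun n => (hv_adapted n).add measurable_const
  have hw_nonneg : ∀ n ω, 0 ≤ w n ω := fun n ω => add_nonneg (hv_nonneg n ω) (ht_nonneg n)
  have hsupW : ∀ n, P[w (n + 1) | ℱ n] ≤ᵐ[P] w n := by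
    intro n
    have hw_eq : w (n + 1) = v (n + 1) + fun _ => t (n + 1) := rfl
    have h1 : P[w (n + 1) | ℱ n] =ᵐ[P] P[v (n + 1) | ℱ n] + P[(fun _ => t (n + 1)) | ℱ n] := by
      rw [hw_eq]; exact condExp_add (hv_int _) (integrable_const _) _
    have h2 : P[(fun _ : Ω => t (n + 1)) | ℱ n] = fun _ => t (n + 1) := condExp_const (ℱ.le n) _
    filter_upwards [h1, hrec n] with ω h1ω h2ω
    have hv1 : (1 - χ n) * v n ω ≤ v n ω := by
      nlinarith [hv_nonneg n ω, (hχ n).1, (hχ n).2]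
    have h3 : (P[w (n + 1) | ℱ n]) ω = (P[v (n + 1) | ℱ n]) ω + t (n + 1) := by
      rw [h1ω]; simp [h2]
    have h4 : (P[v (n + 1) | ℱ n]) ω ≤ (1 - χ n) * v n ω + β n := h2ω
    have htr := ht_rec n
    have hw : w n ω = v n ω + t n := rfl
    rw [h3, hw]
    linarith
  have hsm : Supermartingale w ℱ P := supermartingale_nat hwadp.stronglyAdapted hwint hsupW
  -- expectation of w is monotone, giving the L¹ bound
  have hwmono : ∀ n, ∫ ω, w n ω ∂P ≤ ∫ ω, w 0 ω ∂P := by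
    intro n
    induction n with
    | zero => exact le_rfl
    | succ n ih =>
      have h1 : ∫ ω, w (n + 1) ω ∂P = ∫ ω, (P[w (n + 1) | ℱ n]) ω ∂P :=
        (integral_condExp (ℱ.le n)).symm
      have h2 : ∫ ω, (P[w (n + 1) | ℱ n]) ω ∂P ≤ ∫ ω, w n ω ∂P :=
        integral_mono_ae integrable_condExp (hwint n) (hsupW n)
      linarith
  have hbdd : ∀ n, eLpNorm ((-w) n) 1 P ≤ ENNReal.ofReal (∫ ω, w 0 ω ∂P) := by
    intro n
    have hneg : (-w) n = fun ω => -(w n ω) := rfl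
    rw [hneg]
    have h1 : eLpNorm (fun ω => -(w n ω)) 1 P = eLpNorm (w n) 1 P := by
      exact eLpNorm_neg (w n) 1 P
    rw [h1, eLpNorm_one_eq_lintegral_enorm,
      ← ofReal_integral_norm_eq_lintegral_enorm (hwint n)]
    apply ENNReal.ofReal_le_ofReal
    have heq : ∫ ω, ‖w n ω‖ ∂P = ∫ ω, w n ω ∂P :=
      integral_congr_ae (Filter.Eventually.of_forall fun ω =>
        Real.norm_of_nonneg (hw_nonneg n ω))
    rw [heq]
    exact hwmono n
  -- a.e. convergence of w, hence of v
  have haeconv : ∀ᵐ ω ∂P, ∃ c, Tendsto (fun n => v n ω) atTop (𝓝 c) := by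
    filter_upwards [hsm.neg.exists_ae_tendsto_of_bdd hbdd] with ω hω
    obtain ⟨c, hc⟩ := hω
    refine ⟨-c, ?_⟩
    have hc' : Tendsto (fun n => w n ω) atTop (𝓝 (-c)) := by
      have := hc.neg
      simpa using this
    have h5 := hc'.sub ht0
    have h6 : (fun n => w n ω - t n) = fun n => v n ω := by
      funext n; simp [hwdef]
    rw [h6] at h5
    simpa using h5
  -- expectations tend to zero (deterministic lemma)
  have hxrec : ∀ k, (∫ ω, v (k + 1) ω ∂P) ≤ (1 - χ k) * (∫ ω, v k ω ∂P) + β k := by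
    intro k
    have h1 : ∫ ω, v (k + 1) ω ∂P = ∫ ω, (P[v (k + 1) | ℱ k]) ω ∂P :=
      (integral_condExp (ℱ.le k)).symm
    have hint_rhs : Integrable (fun ω => (1 - χ k) * v k ω + β k) P :=
      ((hv_int k).const_mul _).add (integrable_const _)
    have h2 : ∫ ω, (P[v (k + 1) | ℱ k]) ω ∂P ≤ ∫ ω, ((1 - χ k) * v k ω + β k) ∂P :=
      integral_mono_ae integrable_condExp hint_rhs (hrec k)
    have h3 : ∫ ω, ((1 - χ k) * v k ω + β k) ∂P = (1 - χ k) * (∫ ω, v k ω ∂P) + β k := by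
      rw [integral_add ((hv_int k).const_mul _) (integrable_const _), integral_const_mul,
        integral_const]
      simp
    linarith
  have ha_tendsto : Tendsto (fun n => ∫ ω, v n ω ∂P) atTop (𝓝 0) :=
    det_tendsto_zero (fun n => ∫ ω, v n ω ∂P) χ β
      (fun k => integral_nonneg (hv_nonneg k)) hχ hβ hχ_div hβ_sum hratio hxrec
  -- Fatou
  have hmeasv : ∀ n, Measurable (v n) := fun n =>
    (hv_adapted n).mono (ℱ.le n) le_rfl
  have hlint : ∀ n, ∫⁻ ω, ENNReal.ofReal (v n ω) ∂P = ENNReal.ofReal (∫ ω, v n ω ∂P) :=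
    fun n => (ofReal_integral_eq_lintegral_ofReal (hv_int n)
      (Filter.Eventually.of_forall fun ω => hv_nonneg n ω)).symm
  have hliminf0 : ∫⁻ ω, liminf (fun n => ENNReal.ofReal (v n ω)) atTop ∂P = 0 := by
    refine le_antisymm ?_ zero_le
    have hle := lintegral_liminf_le (fun n => (hmeasv n).ennreal_ofReal) (μ := P) (u := atTop)
    refine le_trans hle ?_
    have htz : Tendsto (fun n => ∫⁻ ω, ENNReal.ofReal (v n ω) ∂P) atTop (𝓝 0) := by
      simp only [hlint]
      have := ENNReal.tendsto_ofReal ha_tendsto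
      simpa using this
    rw [htz.liminf_eq]
  have hae0 : ∀ᵐ ω ∂P, liminf (fun n => ENNReal.ofReal (v n ω)) atTop = 0 := by
    have hm : Measurable fun ω => liminf (fun n => ENNReal.ofReal (v n ω)) atTop :=
      Measurable.liminf fun n => (hmeasv n).ennreal_ofReal
    have := (lintegral_eq_zero_iff hm).1 hliminf0
    filter_upwards [this] with ω hω using hω
  filter_upwards [haeconv, hae0] with ω hconv h0
  obtain ⟨c, hc⟩ := hconv
  have hc0 : 0 ≤ c := ge_of_tendsto hc (Filter.Eventually.of_forall fun n => hv_nonneg n ω)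
  have hofReal : Tendsto (fun n => ENNReal.ofReal (v n ω)) atTop (𝓝 (ENNReal.ofReal c)) :=
    (ENNReal.continuous_ofReal.tendsto c).comp hc
  have : ENNReal.ofReal c = 0 := by rw [← hofReal.liminf_eq, h0]
  have hc_le : c ≤ 0 := ENNReal.ofReal_eq_zero.1 this
  have : c = 0 := le_antisymm hc_le hc0
  rwa [this] at hc
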